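/- For real numbers m ∉ {0,1} and c ≠ 0, the unit normal n = ((x_{m,c})_r × (x_{m,c})_θ)/‖(x_{m,c})_r × (x_{m,c})_θ‖ of the surface x_{m,c}(r,θ) = (r cos θ, r sin θ, c r^m cos mθ) is semi-rotationally equivariant: for all r > 0 and all θ, α ∈ ℝ one has n(r, θ + α) = R_{(1−m)α}( n(r,θ) ), where R_φ is the rotation of ℝ³ about the z-axis by angle φ. -/

import Mathlib

noncomputable section

/-- Cross product on ℝ³ represented as `ℝ × ℝ × ℝ`. -/
def cross3 (u v : ℝ × ℝ × ℝ) : ℝ × ℝ × ℝ :=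
  (u.2.1 * v.2.2 - u.2.2 * v.2.1,
   u.2.2 * v.1 - u.1 * v.2.2,
   u.1 * v.2.1 - u.2.1 * v.1)

/-- Dot product on ℝ³. -/
def dot3 (u v : ℝ × ℝ × ℝ) : ℝ :=
  u.1 * v.1 + u.2.1 * v.2.1 + u.2.2 * v.2.2

/-- Euclidean norm on ℝ³. -/
def norm3 (u : ℝ × ℝ × ℝ) : ℝ := Real.sqrt (dot3 u u)

/-- Rotation of ℝ³ about the z-axis by angle `φ`. -/
def Rz (φ : ℝ) (v : ℝ × ℝ × ℝ) : ℝ × ℝ × ℝ :=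
  (v.1 * Real.cos φ - v.2.1 * Real.sin φ,
   v.1 * Real.sin φ + v.2.1 * Real.cos φ, v.2.2)

lemma xr_deriv (m c r t : ℝ) (hr : 0 < r) :
    deriv (fun s' => ((s' * Real.cos t, s' * Real.sin t,
        c * s' ^ m * Real.cos (m * t)) : ℝ × ℝ × ℝ)) r
      = (Real.cos t, Real.sin t, c * (m * r ^ (m - 1)) * Real.cos (m * t)) := by
  have h1 : HasDerivAt (fun s' : ℝ => s' * Real.cos t) (Real.cos t) r := by
    simpa using (hasDerivAt_id r).mul_const (Real.cos t)
  have h2 : HasDerivAt (fun s' : ℝ => s' * Real.sin t) (Real.sin t) r := by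
    simpa using (hasDerivAt_id r).mul_const (Real.sin t)
  have h3 : HasDerivAt (fun s' : ℝ => c * s' ^ m * Real.cos (m * t))
      (c * (m * r ^ (m - 1)) * Real.cos (m * t)) r :=
    ((Real.hasDerivAt_rpow_const (p := m) (Or.inl hr.ne')).const_mul c).mul_const _
  exact (HasDerivAt.prodMk h1 (HasDerivAt.prodMk h2 h3)).deriv

lemma xt_deriv (m c r t : ℝ) :
    deriv (fun t' => ((r * Real.cos t', r * Real.sin t',
        c * r ^ m * Real.cos (m * t')) : ℝ × ℝ × ℝ)) t
      = (-(r * Real.sin t), r * Real.cos t, c * r ^ m * (-Real.sin (m * t) * m)) := by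
  have h1 : HasDerivAt (fun t' : ℝ => r * Real.cos t') (-(r * Real.sin t)) t := by
    simpa [mul_comm] using (Real.hasDerivAt_cos t).const_mul r
  have h2 : HasDerivAt (fun t' : ℝ => r * Real.sin t') (r * Real.cos t) t := by
    simpa [mul_comm] using (Real.hasDerivAt_sin t).const_mul r
  have hmt : HasDerivAt (fun t' : ℝ => m * t') m t := by
    simpa using (hasDerivAt_id t).const_mul m
  have h3 : HasDerivAt (fun t' : ℝ => c * r ^ m * Real.cos (m * t'))
      (c * r ^ m * (-Real.sin (m * t) * m)) t :=
    ((Real.hasDerivAt_cos (m * t)).comp t hmt).const_mul _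
  exact (HasDerivAt.prodMk h1 (HasDerivAt.prodMk h2 h3)).deriv

lemma cross_eq (m c r t : ℝ) (hr : 0 < r) :
    cross3 (Real.cos t, Real.sin t, c * (m * r ^ (m - 1)) * Real.cos (m * t))
      (-(r * Real.sin t), r * Real.cos t, c * r ^ m * (-Real.sin (m * t) * m))
      = (-(c * m * r ^ m) * Real.cos ((m - 1) * t),
         (c * m * r ^ m) * Real.sin ((m - 1) * t), r) := by
  have hpow : r ^ (m - 1) * r = r ^ m := by
    have h := (Real.rpow_add hr (m - 1) 1).symm
    simpa [Real.rpow_one] using h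
  rw [show (m - 1) * t = m * t - t by ring, Real.cos_sub, Real.sin_sub]
  refine Prod.ext ?_ (Prod.ext ?_ ?_)
  · simp only [cross3]
    linear_combination (-(c * m * Real.cos (m * t) * Real.cos t)) * hpow
  · simp only [cross3]
    linear_combination (-(c * m * Real.cos (m * t) * Real.sin t)) * hpow
  · simp only [cross3]
    linear_combination r * (Real.sin_sq_add_cos_sq t)

lemma norm_eq (K r a : ℝ) :
    norm3 (-K * Real.cos a, K * Real.sin a, r) = Real.sqrt (K ^ 2 + r ^ 2) := by
  unfold norm3 dot3
  congr 1
  simp only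
  linear_combination K ^ 2 * (Real.sin_sq_add_cos_sq a)

/-- For `m ∉ {0,1}` and `c ≠ 0`, the unit normal of
`x_{m,c}(r,θ) = (r cos θ, r sin θ, c r^m cos mθ)` is semi-rotationally equivariant:
`n(r, θ + α) = R_{(1−m)α}(n(r,θ))` for all `r > 0` and `θ, α ∈ ℝ`. -/
theorem stmt_5 (m c : ℝ) (hm0 : m ≠ 0) (hm1 : m ≠ 1) (hc : c ≠ 0) :
    let x : ℝ → ℝ → ℝ × ℝ × ℝ :=
      fun s t => (s * Real.cos t, s * Real.sin t, c * s ^ m * Real.cos (m * t))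
    let n : ℝ → ℝ → ℝ × ℝ × ℝ := fun s t =>
      let xr := deriv (fun s' => x s' t) s
      let xθ := deriv (fun t' => x s t') t
      (norm3 (cross3 xr xθ))⁻¹ • cross3 xr xθ
    ∀ r θ α : ℝ, 0 < r → n r (θ + α) = Rz ((1 - m) * α) (n r θ) := by
  intro x n r θ α hr
  simp only [n, x, xr_deriv m c r _ hr, xt_deriv m c r _, cross_eq m c r _ hr, norm_eq]
  set N := (Real.sqrt ((c * m * r ^ m) ^ 2 + r ^ 2))⁻¹ with hN
  set K := c * m * r ^ m with hK
  simp only [Rz, Prod.smul_mk, smul_eq_mul]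
  refine Prod.ext ?_ (Prod.ext ?_ ?_)
  · simp only
    rw [show (1 - m) * α = -((m - 1) * α) by ring, Real.cos_neg, Real.sin_neg,
      show (m - 1) * (θ + α) = (m - 1) * θ + (m - 1) * α by ring, Real.cos_add]
    ring
  · simp only
    rw [show (1 - m) * α = -((m - 1) * α) by ring, Real.cos_neg, Real.sin_neg,
      show (m - 1) * (θ + α) = (m - 1) * θ + (m - 1) * α by ring, Real.sin_add]
    ring
  · rfl
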